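/- Let X_1, …, X_n be independent square-integrable random vectors in ℝ^d with E[X_i] = 0 and ∑_{i=1}^n E[X_i X_iᵀ] = n I_d (i.e. ∑_i E[X_{ij} X_{ik}] = n δ_{jk} for all j, k). Let (X′_1, …, X′_n) be an independent copy of (X_1, …, X_n) (independent of it), and let I be uniformly distributed on {1, …, n} and independent of all the X_i and X′_i. Set W = n^{−1/2} ∑_{i=1}^n X_i and δ = n^{−1/2}(X′_I − X_I). Then for all 1 ≤ j, k ≤ d, almost surely E[δ_j δ_k | σ(W)] = (2/n) δ_{jk} + (1/n)( E[ (1/n) ∑_{i=1}^n X_{ij} X_{ik} | σ(W) ] − δ_{jk} ), where δ_j denotes the j-th coordinate of δ and δ_{jk} the Kronecker delta. -/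

import Mathlib

open MeasureTheory ProbabilityTheory

lemma memLp_mul_integrable {Ω : Type} [MeasurableSpace Ω] {μ : Measure Ω}
    {f g : Ω → ℝ} (hf : MemLp f 2 μ) (hg : MemLp g 2 μ) :
    Integrable (fun ω => f ω * g ω) μ := by
  have h := memLp_one_iff_integrable.mp
    (hg.smul hf (p := 2) (q := 2) (r := 1))
  exact h

theorem stmt16 (n d : ℕ) (hn : 1 ≤ n) (hd : 1 ≤ d)
    (Ω : Type) (mΩ : MeasurableSpace Ω) (μ : Measure Ω)
    (hμ : IsProbabilityMeasure μ)
    (X X' : Fin n → Ω → EuclideanSpace ℝ (Fin d))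
    (hXm : ∀ i, Measurable (X i)) (hX'm : ∀ i, Measurable (X' i))
    (hL2 : ∀ i, MemLp (X i) 2 μ)
    (hmean : ∀ i, ∫ ω, X i ω ∂μ = 0)
    -- ∑_i E[X_{ij} X_{ik}] = n δ_{jk}
    (hcov : ∀ j k : Fin d,
      (∑ i, ∫ ω, X i ω j * X i ω k ∂μ) = n * (if j = k then 1 else 0))
    -- the 2n random vectors X_1, …, X_n, X'_1, …, X'_n are mutually independent
    (hindep : iIndepFun (Sum.elim X X') μ)
    -- (X'_1, …, X'_n) has the same (joint) law as (X_1, …, X_n)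
    (hcopy : Measure.map (fun ω => fun i => X' i ω) μ
      = Measure.map (fun ω => fun i => X i ω) μ)
    (I : Ω → Fin n) (hIm : Measurable I)
    (hIunif : ∀ i, μ (I ⁻¹' {i}) = 1 / n)
    (hIindep : IndepFun I (fun ω => (fun i => X i ω, fun i => X' i ω)) μ)
    (W δ : Ω → EuclideanSpace ℝ (Fin d))
    (hW : ∀ ω, W ω = (Real.sqrt n)⁻¹ • ∑ i, X i ω)
    (hδ : ∀ ω, δ ω = (Real.sqrt n)⁻¹ • (X' (I ω) ω - X (I ω) ω)) :
    ∀ j k : Fin d,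
      μ[fun ω => δ ω j * δ ω k | MeasurableSpace.comap W inferInstance]
        =ᵐ[μ] fun ω =>
          2 / n * (if j = k then 1 else 0)
            + 1 / n *
              ((μ[fun ω => (n : ℝ)⁻¹ * ∑ i, X i ω j * X i ω k |
                  MeasurableSpace.comap W inferInstance]) ω
                - (if j = k then 1 else 0)) := by
  intro j k
  have hn' : (0:ℝ) < n := by exact_mod_cast hn
  have hn0 : (n:ℝ) ≠ 0 := ne_of_gt hn'
  -- measurability basics
  have hXvm : Measurable (fun ω => fun i => X i ω) := measurable_pi_lambda _ hXm
  have hX'vm : Measurable (fun ω => fun i => X' i ω) := measurable_pi_lambda _ hX'm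
  have hWm : Measurable W := by
    have hWe : W = fun ω => (Real.sqrt n)⁻¹ • ∑ i, X i ω := funext hW
    rw [hWe]
    exact (Finset.measurable_sum Finset.univ (fun i _ => hXm i)).const_smul ((Real.sqrt n)⁻¹)
  have hm : MeasurableSpace.comap W inferInstance ≤ mΩ := hWm.comap_le
  have hcoordm : ∀ (l : Fin d), Measurable (fun v : EuclideanSpace ℝ (Fin d) => v l) :=
    fun l => (EuclideanSpace.proj (𝕜 := ℝ) l).measurable
  have hcm : ∀ (i : Fin n) (l : Fin d),
      Measurable (fun y : Fin n → EuclideanSpace ℝ (Fin d) => y i l) :=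
    fun i l => (hcoordm l).comp (measurable_pi_apply i)
  have hXl2 : ∀ (i) (l : Fin d), MemLp (fun ω => X i ω l) 2 μ := fun i l =>
    (EuclideanSpace.proj (𝕜 := ℝ) l).comp_memLp' (hL2 i)
  have hXlm : ∀ (i) (l : Fin d), Measurable (fun ω => X i ω l) :=
    fun i l => (hcoordm l).comp (hXm i)
  have hX'lm : ∀ (i) (l : Fin d), Measurable (fun ω => X' i ω l) :=
    fun i l => (hcoordm l).comp (hX'm i)
  -- law of X' i equals law of X i
  have hlaw : ∀ i, Measure.map (X' i) μ = Measure.map (X i) μ := by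
    intro i
    have h1 : X' i = (fun v : Fin n → EuclideanSpace ℝ (Fin d) => v i) ∘ (fun ω => fun i => X' i ω) := rfl
    have h2 : X i = (fun v : Fin n → EuclideanSpace ℝ (Fin d) => v i) ∘ (fun ω => fun i => X i ω) := rfl
    rw [h1, h2, ← Measure.map_map (measurable_pi_apply i) hX'vm,
      ← Measure.map_map (measurable_pi_apply i) hXvm, hcopy]
  have hX'L2 : ∀ i, MemLp (X' i) 2 μ := by
    intro i
    have h1 : MemLp id 2 (Measure.map (X i) μ) :=
      (memLp_map_measure_iff aestronglyMeasurable_id (hXm i).aemeasurable).mpr (hL2 i)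
    rw [← hlaw i] at h1
    exact (memLp_map_measure_iff aestronglyMeasurable_id (hX'm i).aemeasurable).mp h1
  have hX'l2 : ∀ (i) (l : Fin d), MemLp (fun ω => X' i ω l) 2 μ := fun i l =>
    (EuclideanSpace.proj (𝕜 := ℝ) l).comp_memLp' (hX'L2 i)
  -- means of coordinates
  have hmean_c : ∀ (i) (l : Fin d), ∫ ω, X i ω l ∂μ = 0 := by
    intro i l
    have h := ContinuousLinearMap.integral_comp_comm (EuclideanSpace.proj (𝕜 := ℝ) l)
      ((hL2 i).integrable one_le_two)
    simpa [hmean i] using h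
  have hmean_c' : ∀ (i) (l : Fin d), ∫ ω, X' i ω l ∂μ = 0 := by
    intro i l
    have h1 : ∫ ω, X' i ω l ∂μ = ∫ v, v l ∂(Measure.map (X' i) μ) :=
      (integral_map (hX'm i).aemeasurable (hcoordm l).aestronglyMeasurable).symm
    rw [h1, hlaw i, integral_map (hXm i).aemeasurable (hcoordm l).aestronglyMeasurable]
    exact hmean_c i l
  have hcov' : ∀ i, ∫ ω, X' i ω j * X' i ω k ∂μ = ∫ ω, X i ω j * X i ω k ∂μ := by
    intro i
    have hg : Measurable (fun v : EuclideanSpace ℝ (Fin d) => v j * v k) :=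
      (hcoordm j).mul (hcoordm k)
    have h1 : ∫ ω, X' i ω j * X' i ω k ∂μ
        = ∫ v, v j * v k ∂(Measure.map (X' i) μ) :=
      (integral_map (hX'm i).aemeasurable hg.aestronglyMeasurable).symm
    rw [h1, hlaw i, integral_map (hXm i).aemeasurable hg.aestronglyMeasurable]
  -- the two vectors are independent
  have hvec : IndepFun (fun ω => fun i => X i ω) (fun ω => fun i => X' i ω) μ := by
    have hmeas : ∀ i : Fin n ⊕ Fin n, Measurable (Sum.elim X X' i) := by
      rintro (i | i)
      · exact hXm i
      · exact hX'm i
    set SL : Finset (Fin n ⊕ Fin n) := Finset.univ.map ⟨Sum.inl, Sum.inl_injective⟩ with hSL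
    set SR : Finset (Fin n ⊕ Fin n) := Finset.univ.map ⟨Sum.inr, Sum.inr_injective⟩ with hSR
    have hdisj : Disjoint SL SR := by
      simp [hSL, hSR, Finset.disjoint_left]
    have base := hindep.indepFun_finset SL SR hdisj hmeas
    have hΦS : Measurable (fun g : {x : Fin n ⊕ Fin n // x ∈ SL} → EuclideanSpace ℝ (Fin d) =>
        fun i : Fin n => g ⟨Sum.inl i, by simp [hSL]⟩) :=
      measurable_pi_lambda _ fun i => measurable_pi_apply _
    have hΦT : Measurable (fun g : {x : Fin n ⊕ Fin n // x ∈ SR} → EuclideanSpace ℝ (Fin d) =>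
        fun i : Fin n => g ⟨Sum.inr i, by simp [hSR]⟩) :=
      measurable_pi_lambda _ fun i => measurable_pi_apply _
    exact base.comp hΦS hΦT
  -- uniform distribution of I
  have hunif : ∀ i : Fin n, (μ (I ⁻¹' {i})).toReal = (n:ℝ)⁻¹ := by
    intro i; rw [hIunif i]; simp [ENNReal.toReal_div]
  have hsqrt : (Real.sqrt n)⁻¹ * (Real.sqrt n)⁻¹ = (n:ℝ)⁻¹ := by
    rw [← mul_inv, Real.mul_self_sqrt (by positivity)]
  -- A
  set A : Fin n → Ω → ℝ := fun i ω => (X' i ω j - X i ω j) * (X' i ω k - X i ω k) with hA_def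
  have hA_int : ∀ i, Integrable (A i) μ := fun i =>
    memLp_mul_integrable ((hX'l2 i j).sub (hXl2 i j)) ((hX'l2 i k).sub (hXl2 i k))
  have hT_eq : ∀ ω, δ ω j * δ ω k = (n:ℝ)⁻¹ * A (I ω) ω := by
    intro ω
    rw [hδ ω]
    simp only [PiLp.smul_apply, PiLp.sub_apply, smul_eq_mul, hA_def]
    rw [← hsqrt]; ring
  set S : Ω → ℝ := fun ω => (n : ℝ)⁻¹ * ∑ i, X i ω j * X i ω k with hS_def
  have hS_int : Integrable S μ :=
    (integrable_finset_sum _ fun i _ => memLp_mul_integrable (hXl2 i j) (hXl2 i k)).const_mul _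
  have hT_int : Integrable (fun ω => δ ω j * δ ω k) μ := by
    have he : (fun ω => δ ω j * δ ω k)
        = fun ω => (n:ℝ)⁻¹ * ∑ i, (I ⁻¹' {i}).indicator (A i) ω := by
      funext ω
      rw [hT_eq ω]
      congr 1
      have h1 : ∀ i, (I ⁻¹' {i}).indicator (A i) ω = if I ω = i then A i ω else 0 := by
        intro i; by_cases h : I ω = i <;> simp [Set.indicator_apply, Set.mem_preimage, h]
      rw [Finset.sum_congr rfl fun i _ => h1 i, Finset.sum_ite_eq]
      simp
    rw [he]
    exact (integrable_finset_sum _ fun i _ =>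
      (hA_int i).indicator (hIm (measurableSet_singleton i))).const_mul _
  -- main set-integral computation
  have key : ∀ B : Set (EuclideanSpace ℝ (Fin d)), MeasurableSet B →
      ∫ ω in W ⁻¹' B, δ ω j * δ ω k ∂μ
        = (n:ℝ)⁻¹ * (if j = k then 1 else 0) * (μ (W ⁻¹' B)).toReal
          + (n:ℝ)⁻¹ * ∫ ω in W ⁻¹' B, S ω ∂μ := by
    intro B hB
    have hsum_m : Measurable (fun x : Fin n → EuclideanSpace ℝ (Fin d) =>
        (Real.sqrt n)⁻¹ • ∑ i, x i) :=
      (Finset.measurable_sum Finset.univ fun i _ => measurable_pi_apply i).const_smul ((Real.sqrt n)⁻¹)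
    set B' : Set (Fin n → EuclideanSpace ℝ (Fin d)) :=
      (fun x : Fin n → EuclideanSpace ℝ (Fin d) => (Real.sqrt n)⁻¹ • ∑ i, x i) ⁻¹' B with hB'_def
    have hB'm : MeasurableSet B' := hsum_m hB
    set gB : (Fin n → EuclideanSpace ℝ (Fin d)) → ℝ := B'.indicator (fun _ => 1) with hgB_def
    have hgBm : Measurable gB := measurable_const.indicator hB'm
    set s := W ⁻¹' B with hs_def
    have hsm : MeasurableSet s := hWm hB
    set χ : Ω → ℝ := fun ω => gB (fun i => X i ω) with hχ_def
    have hχ : ∀ ω, χ ω = s.indicator (fun _ => (1:ℝ)) ω := by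
      intro ω
      have hmem : ((fun i => X i ω) ∈ B') ↔ ω ∈ s := by
        rw [hB'_def, hs_def, Set.mem_preimage, Set.mem_preimage, ← hW ω]
      by_cases h : ω ∈ s
      · simp only [hχ_def, hgB_def]
        rw [Set.indicator_of_mem (hmem.mpr h), Set.indicator_of_mem h]
      · simp only [hχ_def, hgB_def]
        rw [Set.indicator_of_notMem (fun hc => h (hmem.mp hc)), Set.indicator_of_notMem h]
    have hχmul : ∀ h : Ω → ℝ, (fun ω => χ ω * h ω) = s.indicator h := by
      intro h; funext ω; rw [hχ ω]
      by_cases hω : ω ∈ s <;> simp [Set.indicator_apply, hω]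
    have hχm : Measurable χ := hgBm.comp hXvm
    have hχ_int_eq : ∫ ω, χ ω ∂μ = (μ s).toReal := by
      rw [show (fun ω => χ ω) = s.indicator (fun _ => (1:ℝ)) from funext hχ,
        integral_indicator_const (1:ℝ) hsm]
      simp [Measure.real]
    have hints : ∀ (u v : Ω → ℝ), MemLp u 2 μ → MemLp v 2 μ →
        Integrable (fun ω => χ ω * (u ω * v ω)) μ := by
      intro u v hu hv
      have he : (fun ω => χ ω * (u ω * v ω)) = s.indicator (fun ω => u ω * v ω) := hχmul _
      rw [he]
      exact (memLp_mul_integrable hu hv).indicator hsm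
    -- step 1 : integrate out I
    have hstep1 : ∀ i : Fin n, ∫ ω, (if I ω = i then (1:ℝ) else 0) * (χ ω * A i ω) ∂μ
        = (n:ℝ)⁻¹ * ∫ ω, χ ω * A i ω ∂μ := by
      intro i
      have hφm : Measurable (fun t : Fin n => if t = i then (1:ℝ) else 0) :=
        measurable_of_countable _
      have hψm : Measurable (fun p : (Fin n → EuclideanSpace ℝ (Fin d)) × (Fin n → EuclideanSpace ℝ (Fin d)) =>
          gB p.1 * ((p.2 i j - p.1 i j) * (p.2 i k - p.1 i k))) :=
        (hgBm.comp measurable_fst).mul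
          ((((hcm i j).comp measurable_snd).sub ((hcm i j).comp measurable_fst)).mul
            (((hcm i k).comp measurable_snd).sub ((hcm i k).comp measurable_fst)))
      have hind := hIindep.comp hφm hψm
      have hmul : ∫ ω, (if I ω = i then (1:ℝ) else 0) * (χ ω * A i ω) ∂μ
          = (∫ ω, (if I ω = i then (1:ℝ) else 0) ∂μ) * ∫ ω, χ ω * A i ω ∂μ := by
        have h := hind.integral_fun_mul_eq_mul_integral
          (hφm.comp hIm).aestronglyMeasurable
          ((hψm.comp (hXvm.prodMk hX'vm))).aestronglyMeasurable
        exact h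
      have hφI : ∫ ω, (if I ω = i then (1:ℝ) else 0) ∂μ = (n:ℝ)⁻¹ := by
        have he : (fun ω => if I ω = i then (1:ℝ) else 0)
            = (I ⁻¹' {i}).indicator (fun _ => (1:ℝ)) := by
          funext ω; by_cases h : I ω = i <;> simp [Set.indicator_apply, h]
        rw [he, integral_indicator_const (1:ℝ) (hIm (measurableSet_singleton i))]
        simp [Measure.real, hunif i]
      rw [hmul, hφI]
    -- step 2 : evaluate the inner integral via independence of X and X'
    have hstep2 : ∀ i : Fin n, ∫ ω, χ ω * A i ω ∂μ
        = (μ s).toReal * (∫ ω, X i ω j * X i ω k ∂μ)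
          + ∫ ω, χ ω * (X i ω j * X i ω k) ∂μ := by
      intro i
      have h1 : Integrable (fun ω => χ ω * (X' i ω j * X' i ω k)) μ :=
        hints _ _ (hX'l2 i j) (hX'l2 i k)
      have h2 : Integrable (fun ω => χ ω * (X' i ω j * X i ω k)) μ :=
        hints _ _ (hX'l2 i j) (hXl2 i k)
      have h3 : Integrable (fun ω => χ ω * (X i ω j * X' i ω k)) μ :=
        hints _ _ (hXl2 i j) (hX'l2 i k)
      have h4 : Integrable (fun ω => χ ω * (X i ω j * X i ω k)) μ :=
        hints _ _ (hXl2 i j) (hXl2 i k)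
      have hexp : (fun ω => χ ω * A i ω) = fun ω =>
          (χ ω * (X' i ω j * X' i ω k) - χ ω * (X' i ω j * X i ω k)
            - χ ω * (X i ω j * X' i ω k)) + χ ω * (X i ω j * X i ω k) := by
        funext ω; simp only [hA_def]; ring
      have e1 : ∫ ω, χ ω * (X' i ω j * X' i ω k) ∂μ
          = (μ s).toReal * ∫ ω, X i ω j * X i ω k ∂μ := by
        have hind : IndepFun χ (fun ω => X' i ω j * X' i ω k) μ :=
          hvec.comp hgBm ((hcm i j).mul (hcm i k))
        have h' : ∫ ω, χ ω * (X' i ω j * X' i ω k) ∂μ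
            = (∫ ω, χ ω ∂μ) * ∫ ω, X' i ω j * X' i ω k ∂μ :=
          hind.integral_fun_mul_eq_mul_integral hχm.aestronglyMeasurable
            (((hX'lm i j).mul (hX'lm i k)).aestronglyMeasurable)
        rw [h', hχ_int_eq, hcov' i]
      have e2 : ∫ ω, χ ω * (X' i ω j * X i ω k) ∂μ = 0 := by
        have hre : (fun ω => χ ω * (X' i ω j * X i ω k))
            = fun ω => (χ ω * X i ω k) * X' i ω j := by funext ω; ring
        have hind : IndepFun (fun ω => χ ω * X i ω k) (fun ω => X' i ω j) μ :=
          hvec.comp (hgBm.mul (hcm i k)) (hcm i j)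
        have h' : ∫ ω, (χ ω * X i ω k) * X' i ω j ∂μ
            = (∫ ω, χ ω * X i ω k ∂μ) * ∫ ω, X' i ω j ∂μ :=
          hind.integral_fun_mul_eq_mul_integral (hχm.mul (hXlm i k)).aestronglyMeasurable
            (hX'lm i j).aestronglyMeasurable
        rw [hre, h', hmean_c' i j, mul_zero]
      have e3 : ∫ ω, χ ω * (X i ω j * X' i ω k) ∂μ = 0 := by
        have hre : (fun ω => χ ω * (X i ω j * X' i ω k))
            = fun ω => (χ ω * X i ω j) * X' i ω k := by funext ω; ring
        have hind : IndepFun (fun ω => χ ω * X i ω j) (fun ω => X' i ω k) μ :=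
          hvec.comp (hgBm.mul (hcm i j)) (hcm i k)
        have h' : ∫ ω, (χ ω * X i ω j) * X' i ω k ∂μ
            = (∫ ω, χ ω * X i ω j ∂μ) * ∫ ω, X' i ω k ∂μ :=
          hind.integral_fun_mul_eq_mul_integral (hχm.mul (hXlm i j)).aestronglyMeasurable
            (hX'lm i k).aestronglyMeasurable
        rw [hre, h', hmean_c' i k, mul_zero]
      have h12 : Integrable (fun ω => χ ω * (X' i ω j * X' i ω k)
          - χ ω * (X' i ω j * X i ω k)) μ := h1.sub h2
      have h123 : Integrable (fun ω => (χ ω * (X' i ω j * X' i ω k)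
          - χ ω * (X' i ω j * X i ω k)) - χ ω * (X i ω j * X' i ω k)) μ := h12.sub h3
      rw [hexp, integral_add h123 h4, integral_sub h12 h3, integral_sub h1 h2, e1, e2, e3]
      ring
    -- expand the set integral over the values of I
    have hterm_eq : ∀ i : Fin n, (fun ω => (if I ω = i then (1:ℝ) else 0) * (χ ω * A i ω))
        = (I ⁻¹' {i}).indicator (s.indicator (A i)) := by
      intro i
      have h1 : (fun ω => χ ω * A i ω) = s.indicator (A i) := hχmul _
      funext ω
      have h2 : χ ω * A i ω = s.indicator (A i) ω := congrFun h1 ω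
      by_cases h : I ω = i <;> simp [Set.indicator_apply, h, h2]
    have hterm_int : ∀ i : Fin n,
        Integrable (fun ω => (if I ω = i then (1:ℝ) else 0) * (χ ω * A i ω)) μ := by
      intro i
      rw [hterm_eq i]
      exact ((hA_int i).indicator hsm).indicator (hIm (measurableSet_singleton i))
    have hTs : ∫ ω in s, δ ω j * δ ω k ∂μ
        = (n:ℝ)⁻¹ * ∑ i, ((n:ℝ)⁻¹ * ((μ s).toReal * (∫ ω, X i ω j * X i ω k ∂μ)
            + ∫ ω, χ ω * (X i ω j * X i ω k) ∂μ)) := by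
      rw [← integral_indicator hsm]
      have he : s.indicator (fun ω => δ ω j * δ ω k)
          = fun ω => (n:ℝ)⁻¹ * ∑ i, (if I ω = i then (1:ℝ) else 0) * (χ ω * A i ω) := by
        funext ω
        have hχmul' : s.indicator (fun ω => δ ω j * δ ω k) ω = χ ω * (δ ω j * δ ω k) :=
          (congrFun (hχmul (fun ω => δ ω j * δ ω k)) ω).symm
        rw [hχmul', hT_eq ω]
        have hsum : ∑ i, (if I ω = i then (1:ℝ) else 0) * (χ ω * A i ω)
            = χ ω * A (I ω) ω := by
          rw [Finset.sum_congr rfl (fun i _ => by rw [ite_mul, one_mul, zero_mul]),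
            Finset.sum_ite_eq]
          simp
        rw [hsum]; ring
      rw [he, integral_const_mul _ _]
      congr 1
      rw [integral_finset_sum _ (fun i _ => hterm_int i)]
      exact Finset.sum_congr rfl fun i _ => (hstep1 i).trans (by rw [hstep2 i])
    have hsum_e : ∑ i, ∫ ω, χ ω * (X i ω j * X i ω k) ∂μ = (n:ℝ) * ∫ ω in s, S ω ∂μ := by
      rw [← integral_finset_sum _ (fun i _ => hints _ _ (hXl2 i j) (hXl2 i k))]
      have he : (fun ω => ∑ i, χ ω * (X i ω j * X i ω k))
          = fun ω => χ ω * ((n:ℝ) * S ω) := by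
        funext ω
        rw [← Finset.mul_sum, hS_def]
        field_simp
      rw [he, show (fun ω => χ ω * ((n:ℝ) * S ω)) = s.indicator (fun ω => (n:ℝ) * S ω)
        from hχmul _, integral_indicator hsm, integral_const_mul _ _]
    rw [hTs, ← Finset.mul_sum, Finset.sum_add_distrib, ← Finset.mul_sum, hcov j k, hsum_e]
    field_simp
  -- conclude via uniqueness of conditional expectation
  have hg_meas : AEStronglyMeasurable[
      (MeasurableSpace.comap W (inferInstance : MeasurableSpace (EuclideanSpace ℝ (Fin d))))] (fun ω =>
        (n:ℝ)⁻¹ * (if j = k then 1 else 0)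
          + (n:ℝ)⁻¹ * (μ[S | MeasurableSpace.comap W inferInstance]) ω) μ :=
    StronglyMeasurable.aestronglyMeasurable
      (stronglyMeasurable_const.add (stronglyMeasurable_condExp.const_mul _))
  have hcond : (fun ω => (n:ℝ)⁻¹ * (if j = k then 1 else 0)
        + (n:ℝ)⁻¹ * (μ[S | MeasurableSpace.comap W inferInstance]) ω)
      =ᵐ[μ] μ[fun ω => δ ω j * δ ω k | MeasurableSpace.comap W inferInstance] := by
    refine ae_eq_condExp_of_forall_setIntegral_eq hm hT_int
      (fun t _ _ => ((integrable_const _).add (integrable_condExp.const_mul _)).integrableOn)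
      (fun t ht _ => ?_) hg_meas
    obtain ⟨B, hB, rfl⟩ := ht
    have hm_t : MeasurableSet[MeasurableSpace.comap W inferInstance] (W ⁻¹' B) := ⟨B, hB, rfl⟩
    rw [key B hB, integral_add ((integrable_const _).integrableOn)
      ((integrable_condExp.const_mul _).integrableOn.integrable), setIntegral_const, integral_const_mul _ _,
      setIntegral_condExp hm hS_int hm_t]
    simp [smul_eq_mul, Measure.real]
    ring
  refine hcond.symm.trans (Filter.Eventually.of_forall fun ω => ?_)
  rw [hS_def]
  ring
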